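/- Define the univariate polynomial P_d(σ) = Σ_{e=0}^{d} (−1)^e · C(σ, e), where C(σ, e) is the binomial coefficient polynomial σ(σ−1)⋯(σ−e+1)/e!. Then P_d has degree exactly d and for every integer σ with 0 ≤ σ ≤ 2⌈(d+1)/2⌉ − 1, P_d(σ) ∈ {0, 1}. -/

import Mathlib

/-- The binomial coefficient polynomial `C(σ, e) = σ(σ−1)⋯(σ−e+1)/e!` in a real variable. -/
noncomputable def choosePoly (e : ℕ) : Polynomial ℝ :=
  ((Nat.factorial e : ℝ))⁻¹ • ∏ t ∈ Finset.range e, (Polynomial.X - Polynomial.C (t : ℝ))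

/-- `P_d(σ) = Σ_{e=0}^{d} (−1)^e C(σ, e)`. -/
noncomputable def Pd (d : ℕ) : Polynomial ℝ :=
  ∑ e ∈ Finset.range (d + 1), ((-1 : ℝ) ^ e) • choosePoly e

open Polynomial Finset

lemma prod_eq_descPochhammer (e : ℕ) :
    ∏ t ∈ Finset.range e, (Polynomial.X - Polynomial.C (t : ℝ)) = descPochhammer ℝ e := by
  induction e with
  | zero => simp [descPochhammer_zero]
  | succ n ih =>
      rw [Finset.prod_range_succ, ih, descPochhammer_succ_right, Polynomial.C_eq_natCast]

lemma choosePoly_natDegree (e : ℕ) : (choosePoly e).natDegree = e := by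
  rw [choosePoly, prod_eq_descPochhammer, Polynomial.smul_eq_C_mul,
    Polynomial.natDegree_C_mul (by positivity), descPochhammer_natDegree]

lemma choosePoly_coeff_self (e : ℕ) : (choosePoly e).coeff e = ((Nat.factorial e : ℝ))⁻¹ := by
  rw [choosePoly, prod_eq_descPochhammer, Polynomial.coeff_smul]
  have h := (monic_descPochhammer ℝ e).leadingCoeff
  rw [Polynomial.leadingCoeff, descPochhammer_natDegree] at h
  rw [h, smul_eq_mul, mul_one]

lemma choosePoly_eval (e m : ℕ) : (choosePoly e).eval (m : ℝ) = (m.choose e : ℝ) := by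
  rw [choosePoly, prod_eq_descPochhammer, Polynomial.eval_smul, smul_eq_mul,
    descPochhammer_eval_eq_descFactorial, Nat.descFactorial_eq_factorial_mul_choose]
  push_cast
  rw [← mul_assoc, inv_mul_cancel₀ (by positivity), one_mul]

lemma Pd_eval (d m : ℕ) :
    (Pd d).eval (m : ℝ) = ∑ e ∈ Finset.range (d + 1), (-1 : ℝ) ^ e * (m.choose e : ℝ) := by
  rw [Pd, Polynomial.eval_finset_sum]
  exact Finset.sum_congr rfl fun e _ => by rw [Polynomial.eval_smul, smul_eq_mul, choosePoly_eval]

lemma alt_sum_choose (n : ℕ) :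
    ∑ e ∈ Finset.range (n + 1), (-1 : ℝ) ^ e * (n.choose e : ℝ) = if n = 0 then 1 else 0 := by
  have h := Int.alternating_sum_range_choose (n := n)
  calc ∑ e ∈ Finset.range (n + 1), (-1 : ℝ) ^ e * (n.choose e : ℝ)
      = ((∑ i ∈ range (n + 1), (-1 : ℤ) ^ i * (n.choose i : ℤ) : ℤ) : ℝ) := by push_cast; rfl
    _ = _ := by rw [h]; split <;> simp

theorem stmt5 (d : ℕ) :
    (Pd d).natDegree = d ∧
    ∀ m : ℕ, m ≤ 2 * ((d + 2) / 2) - 1 →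
      (Pd d).eval (m : ℝ) = 0 ∨ (Pd d).eval (m : ℝ) = 1 := by
  constructor
  · -- degree
    have hle : (Pd d).natDegree ≤ d := by
      apply Polynomial.natDegree_sum_le_of_forall_le
      intro e he
      exact le_trans (Polynomial.natDegree_smul_le _ _)
        (by rw [choosePoly_natDegree]; simp only [Finset.mem_range] at he; omega)
    have hcoeff : (Pd d).coeff d ≠ 0 := by
      rw [Pd, Polynomial.finset_sum_coeff]
      have : ∀ e ∈ Finset.range (d + 1),
          (((-1 : ℝ) ^ e • choosePoly e).coeff d) =
          if e = d then (-1 : ℝ) ^ d * ((Nat.factorial d : ℝ))⁻¹ else 0 := by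
        intro e he
        rw [Polynomial.coeff_smul, smul_eq_mul]
        by_cases h : e = d
        · subst h; rw [choosePoly_coeff_self, if_pos rfl]
        · rw [if_neg h, Polynomial.coeff_eq_zero_of_natDegree_lt, mul_zero]
          rw [choosePoly_natDegree]
          simp only [Finset.mem_range] at he
          omega
      rw [Finset.sum_congr rfl this, Finset.sum_ite_eq' _ d, if_pos (by simp)]
      have : ((Nat.factorial d : ℝ))⁻¹ ≠ 0 := by positivity
      intro h
      rcases mul_eq_zero.mp h with h | h
      · exact absurd h (by positivity)
      · exact this h
    exact le_antisymm hle (Polynomial.le_natDegree_of_ne_zero hcoeff)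
  · intro m hm
    rw [Pd_eval]
    by_cases hmd : m ≤ d
    · -- sum over range (d+1) equals sum over range (m+1), extra terms vanish
      have : ∑ e ∈ Finset.range (d + 1), (-1 : ℝ) ^ e * (m.choose e : ℝ) =
          ∑ e ∈ Finset.range (m + 1), (-1 : ℝ) ^ e * (m.choose e : ℝ) := by
        refine (Finset.sum_subset (Finset.range_subset_range.mpr (by omega)) ?_).symm
        intro e _ he
        simp only [Finset.mem_range, not_lt] at he
        rw [Nat.choose_eq_zero_of_lt (by omega), Nat.cast_zero, mul_zero]
      rw [this, alt_sum_choose]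
      by_cases h0 : m = 0
      · right; rw [if_pos h0]
      · left; rw [if_neg h0]
    · -- then m = d + 1 and d is even
      have hd : m = d + 1 ∧ d % 2 = 0 := by omega
      obtain ⟨hm1, hde⟩ := hd
      subst hm1
      right
      have h := alt_sum_choose (d + 1)
      rw [Finset.sum_range_succ, if_neg (by omega)] at h
      have h2 : ∑ e ∈ Finset.range (d + 1), (-1 : ℝ) ^ e * ((d+1).choose e : ℝ) =
          -((-1 : ℝ) ^ (d+1) * ((d+1).choose (d+1) : ℝ)) := by linarith
      rw [h2, Nat.choose_self, Nat.cast_one, mul_one, pow_succ]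
      rw [Nat.even_iff.mpr hde |>.neg_one_pow]
      ring
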